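/- Let 𝒟 = {𝒞₁,…,𝒞_m} (m ≥ 2) be a family of coverings of U and 𝒟⁻ = {𝒞₁,…,𝒞_{m−1}} obtained by deleting the covering 𝒞_m. Write Π(𝒟) = (d_ij), Π(𝒟⁻) = (e⁻_ij), and Δe_ij = Π({𝒞_m})_ij = (M_{𝒞_m} ⊙ M_{𝒞_m}ᵀ)_ij. Then for all i, j: if d_ij = 1 and Δe_ij = 1 then e⁻_ij = 1; if d_ij = 0 and Δe_ij = 1 then e⁻_ij = 0; and if d_ij = 0 and Δe_ij = 0 then e⁻_ij equals the ⊙-product of the i-th row of M_{𝒟⁻} with the transpose of its j-th row. -/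

import Mathlib

/-- Boolean product of Boolean matrices: `(A • B) i j = ⋁ k, A i k ∧ B k j`. -/
def bDot {α β γ : Type*} [Fintype β] (A : α → β → Bool) (B : β → γ → Bool) :
    α → γ → Bool := fun i j => decide (∃ k, A i k = true ∧ B k j = true)

/-- The `⊙` product of Boolean matrices: `(A ⊙ B) i j = 1` iff `A i k ≤ B k j` for all `k`. -/
def oDot {α β γ : Type*} [Fintype β] (A : α → β → Bool) (B : β → γ → Bool) :
    α → γ → Bool := fun i j => decide (∀ k, A i k ≤ B k j)

/-- Matrix representation of a family of subsets of `Fin n` indexed by `ι`. -/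
def Mrep {n : ℕ} {ι : Type*} (C : ι → Finset (Fin n)) : Fin n → ι → Bool :=
  fun i j => decide (i ∈ C j)

/-- Type-1 characteristic matrix `Γ(𝒞) = M_𝒞 • M_𝒞ᵀ`. -/
def Gamma {n : ℕ} {ι : Type*} [Fintype ι] (C : ι → Finset (Fin n)) :
    Fin n → Fin n → Bool :=
  bDot (Mrep C) (fun k j => Mrep C j k)

/-- Type-2 characteristic matrix `Π(𝒞) = M_𝒞 ⊙ M_𝒞ᵀ`. -/
def Pi2 {n : ℕ} {ι : Type*} [Fintype ι] (C : ι → Finset (Fin n)) :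
    Fin n → Fin n → Bool :=
  oDot (Mrep C) (fun k j => Mrep C j k)

/-- An indexed family of subsets of `Fin n` is a covering: all blocks nonempty
and they cover the universe. -/
def IsCovering {n : ℕ} {ι : Type*} (C : ι → Finset (Fin n)) : Prop :=
  (∀ k, (C k).Nonempty) ∧ ∀ x : Fin n, ∃ k, x ∈ C k

/-- Theorem 3.21: deleting the last covering 𝒞_m from 𝒟 = {𝒞₁,…,𝒞_m} (m ≥ 2).
With `Π(𝒟) = (d_ij)`, `Π(𝒟⁻) = (e⁻_ij)` and `Δe_ij = Π({𝒞_m})_ij`: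
if `d_ij = 1` and `Δe_ij = 1` then `e⁻_ij = 1`; if `d_ij = 0` and `Δe_ij = 1`
then `e⁻_ij = 0`; and if `d_ij = 0` and `Δe_ij = 0` then `e⁻_ij` is the
`⊙`-product of the `i`-th row of `M_{𝒟⁻}` with the transpose of its `j`-th row. -/
theorem pi_delete_covering {n m : ℕ} (hm : 1 ≤ m) (c : Fin (m + 1) → ℕ)
    (D : (t : Fin (m + 1)) → Fin (c t) → Finset (Fin n))
    (hD : ∀ t, IsCovering (D t)) :
    ∀ i j : Fin n,
      (Pi2 (fun q : Σ t : Fin (m + 1), Fin (c t) => D q.1 q.2) i j = true →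
        Pi2 (D (Fin.last m)) i j = true →
        Pi2 (fun q : Σ t : Fin m, Fin (c t.castSucc) => D q.1.castSucc q.2) i j
          = true) ∧
      (Pi2 (fun q : Σ t : Fin (m + 1), Fin (c t) => D q.1 q.2) i j = false →
        Pi2 (D (Fin.last m)) i j = true →
        Pi2 (fun q : Σ t : Fin m, Fin (c t.castSucc) => D q.1.castSucc q.2) i j
          = false) ∧
      (Pi2 (fun q : Σ t : Fin (m + 1), Fin (c t) => D q.1 q.2) i j = false →
        Pi2 (D (Fin.last m)) i j = false →
        Pi2 (fun q : Σ t : Fin m, Fin (c t.castSucc) => D q.1.castSucc q.2) i j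
          = oDot (Mrep (fun q : Σ t : Fin m, Fin (c t.castSucc) => D q.1.castSucc q.2))
              (fun k j => Mrep (fun q : Σ t : Fin m, Fin (c t.castSucc) =>
                D q.1.castSucc q.2) j k) i j) := by
  intro i j
  unfold Pi2 oDot Mrep at *
  refine ⟨?_, ?_, fun _ _ => rfl⟩
  · intro h1 _
    simp only [Pi2, oDot, Mrep, decide_eq_true_eq] at *
    exact fun ⟨t, k⟩ => h1 ⟨t.castSucc, k⟩
  · intro h1 h2
    simp only [Pi2, oDot, Mrep, decide_eq_true_eq, decide_eq_false_iff_not,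
      not_forall] at *
    obtain ⟨⟨t, k⟩, hq⟩ := h1
    by_cases ht : t = Fin.last m
    · subst ht
      exact absurd (h2 k) hq
    · obtain ⟨t', rfl⟩ := Fin.exists_castSucc_eq.mpr ht
      exact ⟨⟨t', k⟩, by simpa using hq⟩
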